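/- For all integers m ≥ 1 and t ≥ 1, the domination number of the tree W_{m,t} equals m(3t+1) + 1; that is, the minimum cardinality of a dominating set of W_{m,t} is m(3t+1)+1. -/

import Mathlib

/-- `S` is a dominating set of `G`: every vertex is in `S` or adjacent to a member of `S`. -/
def SimpleGraph.DomSet {V : Type*} (G : SimpleGraph V) (S : Finset V) : Prop :=
  ∀ v, v ∈ S ∨ ∃ u ∈ S, G.Adj u v

/-- The domination number `γ(G)`: the minimum cardinality of a dominating set of `G`. -/
noncomputable def domNumber {V : Type*} [Fintype V] (G : SimpleGraph V) : ℕ :=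
  sInf {k | ∃ S : Finset V, G.DomSet S ∧ S.card = k}

/-- Vertices of the rooted gadget `F_t`: a root together with `t` copies of the rooted
three-vertex path `L`. -/
def FVert (t : ℕ) : Type := Unit ⊕ (Fin t × Fin 3)

instance (t : ℕ) : Fintype (FVert t) := by unfold FVert; infer_instance

/-- Base edge relation of `F_t`: the root is joined to the root (vertex `0`) of each copy of
`L`, and each copy of `L` carries path edges `0-1-2`. -/
def FRel (t : ℕ) (x y : FVert t) : Prop :=
  (∃ ℓ : Fin t, x = Sum.inl () ∧ y = Sum.inr (ℓ, 0)) ∨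
  (∃ (ℓ : Fin t) (a b : Fin 3), (SimpleGraph.pathGraph 3).Adj a b ∧
    x = Sum.inr (ℓ, a) ∧ y = Sum.inr (ℓ, b))

/-- The rooted tree `F_t` (root `Sum.inl ()`). -/
def Ftree (t : ℕ) : SimpleGraph (FVert t) := SimpleGraph.fromRel (FRel t)

/-- Vertices of the rooted gadget `H_t`: a root together with three copies of `F_t`. -/
def HVert (t : ℕ) : Type := Unit ⊕ (Fin 3 × FVert t)

instance (t : ℕ) : Fintype (HVert t) := by unfold HVert; infer_instance

/-- Base edge relation of `H_t`: the root is joined to the root of each of three copies of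
`F_t`, and each copy carries the edges of `F_t`. -/
def HRel (t : ℕ) (x y : HVert t) : Prop :=
  (∃ b : Fin 3, x = Sum.inl () ∧ y = Sum.inr (b, Sum.inl ())) ∨
  (∃ (b : Fin 3) (p q : FVert t), (Ftree t).Adj p q ∧
    x = Sum.inr (b, p) ∧ y = Sum.inr (b, q))

/-- The rooted tree `H_t` (root `Sum.inl ()`). -/
def Htree (t : ℕ) : SimpleGraph (HVert t) := SimpleGraph.fromRel (HRel t)

/-- Vertices of `W_{m,t}`: a root, `m` copies of `H_t`, and one copy of the rooted
two-vertex path `X`. -/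
def WVert (m t : ℕ) : Type := Unit ⊕ ((Fin m × HVert t) ⊕ Fin 2)

instance (m t : ℕ) : Fintype (WVert m t) := by unfold WVert; infer_instance

/-- Base edge relation of `W_{m,t}`: the root is joined to the root of each copy of `H_t`
and to the root (vertex `0`) of the copy of `X`; each copy of `H_t` carries the edges of
`H_t`; and `X` carries its single edge `0-1`. -/
def WRel (m t : ℕ) (x y : WVert m t) : Prop :=
  (∃ i : Fin m, x = Sum.inl () ∧ y = Sum.inr (Sum.inl (i, Sum.inl ()))) ∨
  (x = Sum.inl () ∧ y = Sum.inr (Sum.inr 0)) ∨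
  (∃ (i : Fin m) (p q : HVert t), (Htree t).Adj p q ∧
    x = Sum.inr (Sum.inl (i, p)) ∧ y = Sum.inr (Sum.inl (i, q))) ∨
  (x = Sum.inr (Sum.inr 0) ∧ y = Sum.inr (Sum.inr 1))

/-- The tree `W_{m,t}`. -/
def Wtree (m t : ℕ) : SimpleGraph (WVert m t) := SimpleGraph.fromRel (WRel m t)

open SimpleGraph Finset

lemma path3 (a b : Fin 3) : (SimpleGraph.pathGraph 3).Adj a b ↔ ((a:ℕ) + 1 = b ∨ (b:ℕ) + 1 = a) := by
  rw [pathGraph, hasse_adj]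
  simp only [← Fin.coe_covBy_iff, Order.covBy_iff_add_one_eq]

lemma p3a {a : Fin 3} (h : (pathGraph 3).Adj a 2) : a = 1 := by
  rw [path3] at h; revert h; revert a; decide

lemma p3b {a : Fin 3} (h : (pathGraph 3).Adj a 0) : a = 1 := by
  rw [path3] at h; revert h; revert a; decide

lemma p3c : (pathGraph 3).Adj 1 0 := by rw [path3]; decide
lemma p3d : (pathGraph 3).Adj 1 2 := by rw [path3]; decide

-- neighbors of an end-of-path vertex in Ftree
lemma fadj2 {t : ℕ} {ℓ : Fin t} {x : FVert t} (h : (Ftree t).Adj x (Sum.inr (ℓ, (2:Fin 3)))) :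
    x = Sum.inr (ℓ, (1:Fin 3)) := by
  replace h := (SimpleGraph.fromRel_adj (FRel t) _ _).mp h
  obtain ⟨-, h | h⟩ := h <;>
    rcases h with ⟨ℓ', h1, h2⟩ | ⟨ℓ', a, b, hab, h1, h2⟩
  · injection h2 with h2'; injection h2' with h3 h4
    exact absurd h4 (by decide)
  · injection h2 with h2'; injection h2' with h3 h4
    subst h3; cases h4
    rw [h1, p3a hab]
  · exact nomatch h1
  · injection h1 with h1'; injection h1' with h3 h4
    subst h3; cases h4
    rw [h2, p3a hab.symm]

-- neighbors of the root of Ftree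
lemma fadj_root {t : ℕ} {x : FVert t} (h : (Ftree t).Adj x (Sum.inl ())) :
    ∃ ℓ : Fin t, x = Sum.inr (ℓ, (0:Fin 3)) := by
  replace h := (SimpleGraph.fromRel_adj (FRel t) _ _).mp h
  obtain ⟨-, h | h⟩ := h <;>
    rcases h with ⟨ℓ', h1, h2⟩ | ⟨ℓ', a, b, hab, h1, h2⟩
  · exact nomatch h2
  · exact nomatch h2
  · exact ⟨ℓ', h2⟩
  · exact nomatch h1

-- neighbors of a non-root vertex of Htree
lemma hadj_inr {t : ℕ} {j : Fin 3} {q : FVert t} {x : HVert t}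
    (h : (Htree t).Adj x (Sum.inr (j, q))) :
    (x = Sum.inl () ∧ q = Sum.inl ()) ∨ ∃ p, x = Sum.inr (j, p) ∧ (Ftree t).Adj p q := by
  replace h := (SimpleGraph.fromRel_adj (HRel t) _ _).mp h
  obtain ⟨-, h | h⟩ := h <;>
    rcases h with ⟨b, h1, h2⟩ | ⟨b, p, q', hpq, h1, h2⟩
  · injection h2 with h2'; injection h2' with h3 h4
    exact Or.inl ⟨h1, h4⟩
  · injection h2 with h2'; injection h2' with h3 h4
    subst h3; cases h4
    exact Or.inr ⟨p, h1, hpq⟩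
  · exact nomatch h1
  · injection h1 with h1'; injection h1' with h3 h4
    subst h3; cases h4
    exact Or.inr ⟨q', h2, hpq.symm⟩

-- neighbors of an H-copy vertex of Wtree
lemma wadj_inl {m t : ℕ} {i : Fin m} {q : HVert t} {x : WVert m t}
    (h : (Wtree m t).Adj x (Sum.inr (Sum.inl (i, q)))) :
    (x = Sum.inl () ∧ q = Sum.inl ()) ∨
      ∃ p, x = Sum.inr (Sum.inl (i, p)) ∧ (Htree t).Adj p q := by
  replace h := (SimpleGraph.fromRel_adj (WRel m t) _ _).mp h
  obtain ⟨-, h | h⟩ := h <;>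
    rcases h with ⟨i', h1, h2⟩ | ⟨h1, h2⟩ | ⟨i', p, q', hpq, h1, h2⟩ | ⟨h1, h2⟩
  · injection h2 with h2'; injection h2' with h2''; injection h2'' with h3 h4
    exact Or.inl ⟨h1, h4⟩
  · injection h2 with h2'; exact nomatch h2'
  · injection h2 with h2'; injection h2' with h2''; injection h2'' with h3 h4
    subst h3; cases h4
    exact Or.inr ⟨p, h1, hpq⟩
  · injection h2 with h2'; exact nomatch h2'
  · exact nomatch h1
  · exact nomatch h1
  · injection h1 with h1'; injection h1' with h1''; injection h1'' with h3 h4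
    subst h3; cases h4
    exact Or.inr ⟨q', h2, hpq.symm⟩
  · injection h1 with h1'; exact nomatch h1'

-- neighbors of the pendant vertex b of X
lemma wadj_b {m t : ℕ} {x : WVert m t}
    (h : (Wtree m t).Adj x (Sum.inr (Sum.inr 1))) : x = Sum.inr (Sum.inr 0) := by
  replace h := (SimpleGraph.fromRel_adj (WRel m t) _ _).mp h
  obtain ⟨-, h | h⟩ := h <;>
    rcases h with ⟨i', h1, h2⟩ | ⟨h1, h2⟩ | ⟨i', p, q', hpq, h1, h2⟩ | ⟨h1, h2⟩
  · injection h2 with h2'; exact nomatch h2'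
  · injection h2 with h2'; injection h2' with h2''
    exact absurd h2'' (by decide)
  · injection h2 with h2'; exact nomatch h2'
  · exact h1
  · exact nomatch h1
  · exact nomatch h1
  · injection h1 with h1'; exact nomatch h1'
  · injection h1 with h1'; injection h1' with h1''
    exact absurd h1'' (by decide)

-- adjacency constructions
lemma adjF2 {t : ℕ} (ℓ : Fin t) {a b : Fin 3} (h : (pathGraph 3).Adj a b) :
    (Ftree t).Adj (Sum.inr (ℓ, a)) (Sum.inr (ℓ, b)) := by
  refine (SimpleGraph.fromRel_adj (FRel t) _ _).mpr ?_
  refine ⟨?_, Or.inl (Or.inr ⟨ℓ, a, b, h, rfl, rfl⟩)⟩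
  intro hc; injection hc with hc'; injection hc' with h1 h2; exact h.ne h2

lemma adjH1 {t : ℕ} (j : Fin 3) :
    (Htree t).Adj (Sum.inl ()) (Sum.inr (j, Sum.inl ())) := by
  refine (SimpleGraph.fromRel_adj (HRel t) _ _).mpr ?_
  exact ⟨fun hc => (nomatch hc), Or.inl (Or.inl ⟨j, rfl, rfl⟩)⟩

lemma adjH2 {t : ℕ} (j : Fin 3) {p q : FVert t} (h : (Ftree t).Adj p q) :
    (Htree t).Adj (Sum.inr (j, p)) (Sum.inr (j, q)) := by
  refine (SimpleGraph.fromRel_adj (HRel t) _ _).mpr ?_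
  refine ⟨?_, Or.inl (Or.inr ⟨j, p, q, h, rfl, rfl⟩)⟩
  intro hc; injection hc with hc'; injection hc' with h1 h2; exact h.ne h2

lemma adjW3 {m t : ℕ} (i : Fin m) {p q : HVert t} (h : (Htree t).Adj p q) :
    (Wtree m t).Adj (Sum.inr (Sum.inl (i, p))) (Sum.inr (Sum.inl (i, q))) := by
  refine (SimpleGraph.fromRel_adj (WRel m t) _ _).mpr ?_
  refine ⟨?_, Or.inl (Or.inr (Or.inr (Or.inl ⟨i, p, q, h, rfl, rfl⟩)))⟩
  intro hc; injection hc with hc'; injection hc' with hc''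
  injection hc'' with h1 h2; exact h.ne h2

lemma adjW1 {m t : ℕ} (i : Fin m) :
    (Wtree m t).Adj (Sum.inl ()) (Sum.inr (Sum.inl (i, Sum.inl ()))) := by
  refine (SimpleGraph.fromRel_adj (WRel m t) _ _).mpr ?_
  exact ⟨fun hc => (nomatch hc), Or.inl (Or.inl ⟨i, rfl, rfl⟩)⟩

lemma adjW2 {m t : ℕ} :
    (Wtree m t).Adj (Sum.inr (Sum.inr 0)) (Sum.inl ()) := by
  refine (SimpleGraph.fromRel_adj (WRel m t) _ _).mpr ?_
  exact ⟨fun hc => (nomatch hc), Or.inr (Or.inr (Or.inl ⟨rfl, rfl⟩))⟩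

lemma adjW4 {m t : ℕ} :
    (Wtree m t).Adj (Sum.inr (Sum.inr 0)) (Sum.inr (Sum.inr 1)) := by
  refine (SimpleGraph.fromRel_adj (WRel m t) _ _).mpr ?_
  refine ⟨?_, Or.inl (Or.inr (Or.inr (Or.inr ⟨rfl, rfl⟩)))⟩
  intro hc; injection hc with hc'; injection hc' with hc''
  exact absurd hc'' (by decide)

instance {t : ℕ} : DecidableEq (FVert t) := by unfold FVert; infer_instance
instance {t : ℕ} : DecidableEq (HVert t) := by unfold HVert; infer_instance
instance {m t : ℕ} : DecidableEq (WVert m t) := by unfold WVert; infer_instance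

/-- the `c` vertices (roots of the `H` copies) -/
def cfun (m t : ℕ) (i : Fin m) : WVert m t := Sum.inr (Sum.inl (i, Sum.inl ()))

/-- the middle vertices of the `L` copies -/
def vfun (m t : ℕ) (p : Fin m × Fin 3 × Fin t) : WVert m t :=
  Sum.inr (Sum.inl (p.1, Sum.inr (p.2.1, Sum.inr (p.2.2, (1:Fin 3)))))

/-- a dominating set -/
def domS (m t : ℕ) : Finset (WVert m t) :=
  ({Sum.inr (Sum.inr 0)} : Finset (WVert m t)) ∪ image (cfun m t) univ ∪ image (vfun m t) univ

lemma domS_dom (m t : ℕ) : (Wtree m t).DomSet (domS m t) := by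
  intro v
  have memA : (Sum.inr (Sum.inr 0) : WVert m t) ∈ domS m t :=
    mem_union.mpr (Or.inl (mem_union.mpr (Or.inl (mem_singleton_self _))))
  have memC : ∀ i : Fin m, cfun m t i ∈ domS m t := fun i =>
    mem_union.mpr (Or.inl (mem_union.mpr (Or.inr (mem_image.mpr ⟨i, mem_univ _, rfl⟩))))
  have memV : ∀ p : Fin m × Fin 3 × Fin t, vfun m t p ∈ domS m t := fun p =>
    mem_union.mpr (Or.inr (mem_image.mpr ⟨p, mem_univ _, rfl⟩))
  rcases v with ⟨⟩ | (⟨i, hv⟩ | x)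
  · exact Or.inr ⟨_, memA, adjW2⟩
  · rcases hv with ⟨⟩ | ⟨j, fv⟩
    · exact Or.inl (memC i)
    · rcases fv with ⟨⟩ | ⟨ℓ, k⟩
      · exact Or.inr ⟨_, memC i, adjW3 i (adjH1 j)⟩
      · have hk : k = 0 ∨ k = 1 ∨ k = 2 := by revert k; decide
        rcases hk with rfl | rfl | rfl
        · exact Or.inr ⟨_, memV (i, j, ℓ), adjW3 i (adjH2 j (adjF2 ℓ p3c))⟩
        · exact Or.inl (memV (i, j, ℓ))
        · exact Or.inr ⟨_, memV (i, j, ℓ), adjW3 i (adjH2 j (adjF2 ℓ p3d))⟩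
  · have hx : x = 0 ∨ x = 1 := by revert x; decide
    rcases hx with rfl | rfl
    · exact Or.inl memA
    · exact Or.inr ⟨_, memA, adjW4⟩

lemma domS_card (m t : ℕ) : (domS m t).card = m * (3 * t + 1) + 1 := by
  have hinjC : Function.Injective (cfun m t) := by
    intro x y h
    injection h with h'; injection h' with h''; injection h'' with h1 h2
  have hinjV : Function.Injective (vfun m t) := by
    intro x y h
    injection h with h'; injection h' with h''; injection h'' with h1 h2
    injection h2 with h3; injection h3 with h4 h5
    injection h5 with h6; injection h6 with h7 h8
    exact Prod.ext h1 (Prod.ext h4 h7)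
  have d1 : Disjoint ({Sum.inr (Sum.inr 0)} : Finset (WVert m t)) (image (cfun m t) univ) := by
    rw [Finset.disjoint_left]
    intro x hx hx'
    replace hx := mem_singleton.mp hx
    obtain ⟨i, -, hi⟩ := mem_image.mp hx'
    rw [hx] at hi
    injection hi with h'; exact nomatch h'
  have d2 : Disjoint (({Sum.inr (Sum.inr 0)} : Finset (WVert m t)) ∪ image (cfun m t) univ)
      (image (vfun m t) univ) := by
    rw [Finset.disjoint_left]
    intro x hx hx'
    obtain ⟨p, -, hp⟩ := mem_image.mp hx'
    rcases mem_union.mp hx with hx | hx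
    · replace hx := mem_singleton.mp hx
      rw [hx] at hp
      injection hp with h'; exact nomatch h'
    · obtain ⟨i, -, hi⟩ := mem_image.mp hx
      rw [← hi] at hp
      injection hp with h'; injection h' with h''; injection h'' with h1 h2
      exact nomatch h2
  rw [domS, card_union_of_disjoint d2, card_union_of_disjoint d1]
  erw [card_singleton]
  rw [ card_image_of_injective _ hinjC, card_image_of_injective _ hinjV, card_univ, card_univ]
  simp only [Fintype.card_fin, Fintype.card_prod]
  ring

/-- decoding function for the lower bound -/
def widx {m t : ℕ} : WVert m t → Option ((Fin m × Fin 3 × Fin t) ⊕ (Fin m ⊕ Unit))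
  | Sum.inl () => none
  | Sum.inr (Sum.inr _) => some (Sum.inr (Sum.inr ()))
  | Sum.inr (Sum.inl (i, Sum.inl ())) => some (Sum.inr (Sum.inl i))
  | Sum.inr (Sum.inl (i, Sum.inr (j, Sum.inl ()))) =>
      if j = 0 then some (Sum.inr (Sum.inl i)) else none
  | Sum.inr (Sum.inl (i, Sum.inr (j, Sum.inr (ℓ, k)))) =>
      if k = 0 then (if j = 0 then some (Sum.inr (Sum.inl i)) else none)
      else some (Sum.inl (i, j, ℓ))

lemma lower_bound {m t : ℕ} (S : Finset (WVert m t)) (hS : (Wtree m t).DomSet S) :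
    m * (3 * t + 1) + 1 ≤ S.card := by
  have key : ∀ kk : (Fin m × Fin 3 × Fin t) ⊕ (Fin m ⊕ Unit),
      ∃ s, s ∈ S ∧ widx s = some kk := by
    rintro (⟨i, j, ℓ⟩ | (i | ⟨⟩))
    · rcases hS (Sum.inr (Sum.inl (i, Sum.inr (j, Sum.inr (ℓ, (2:Fin 3)))))) with hw | ⟨u, hu, hadj⟩
      · exact ⟨_, hw, by simp [widx]⟩
      · rcases wadj_inl hadj with ⟨-, hq⟩ | ⟨p, rfl, hadj2⟩
        · exact nomatch hq
        · rcases hadj_inr hadj2 with ⟨-, hq⟩ | ⟨p', rfl, hadj3⟩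
          · exact nomatch hq
          · rw [fadj2 hadj3] at hu
            exact ⟨_, hu, by simp [widx]⟩
    · rcases hS (Sum.inr (Sum.inl (i, Sum.inr ((0:Fin 3), Sum.inl ())))) with hw | ⟨u, hu, hadj⟩
      · exact ⟨_, hw, by simp [widx]⟩
      · rcases wadj_inl hadj with ⟨rfl, hq⟩ | ⟨p, rfl, hadj2⟩
        · exact nomatch hq
        · rcases hadj_inr hadj2 with ⟨rfl, -⟩ | ⟨p', rfl, hadj3⟩
          · exact ⟨_, hu, by simp [widx]⟩
          · obtain ⟨ℓ, rfl⟩ := fadj_root hadj3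
            exact ⟨_, hu, by simp [widx]⟩
    · rcases hS (Sum.inr (Sum.inr 1)) with hw | ⟨u, hu, hadj⟩
      · exact ⟨_, hw, by simp [widx]⟩
      · rw [wadj_b hadj] at hu
        exact ⟨_, hu, by simp [widx]⟩
  choose g hg1 hg2 using key
  have hcard : (univ : Finset ((Fin m × Fin 3 × Fin t) ⊕ (Fin m ⊕ Unit))).card ≤ S.card := by
    apply card_le_card_of_injOn g (fun kk _ => hg1 kk)
    intro k1 _ k2 _ hEq
    have h1 := hg2 k1
    rw [hEq, hg2 k2] at h1
    exact (Option.some.inj h1).symm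
  rw [card_univ] at hcard
  simp only [Fintype.card_sum, Fintype.card_prod, Fintype.card_fin, Fintype.card_unit] at hcard
  calc m * (3 * t + 1) + 1 = m * (3 * t) + (m + 1) := by ring
  _ ≤ S.card := by omega

/-- The domination number of `W_{m,t}` equals `m(3t+1) + 1`. -/
theorem Wtree_domNumber (m t : ℕ) (hm : 1 ≤ m) (ht : 1 ≤ t) :
    domNumber (Wtree m t) = m * (3 * t + 1) + 1 := by
  have hmem : m * (3 * t + 1) + 1 ∈
      {k | ∃ S : Finset (WVert m t), (Wtree m t).DomSet S ∧ S.card = k} :=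
    ⟨domS m t, domS_dom m t, domS_card m t⟩
  refine le_antisymm (Nat.sInf_le hmem) ?_
  obtain ⟨S', hS', hc⟩ := Nat.sInf_mem (⟨_, hmem⟩ :
    {k | ∃ S : Finset (WVert m t), (Wtree m t).DomSet S ∧ S.card = k}.Nonempty)
  rw [domNumber, ← hc]
  exact lower_bound S' hS'
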